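/- Let P1 and P2 be paths on the triangular grid, each with exactly one bend, such that E(P1) ∩ E(P2) ≠ ∅. Then either there is a single segment s of P1 or of P2 whose edge set contains E(P1) ∩ E(P2), or P1 and P2 have the same bend point b and the two edges of P1 incident to b coincide with the two edges of P2 incident to b (so P1 and P2 are 1-bend paths of the same type bending at the same point). -/

import Mathlib

/-- The triangular grid: the simple graph on `ℤ × ℤ` where two points are adjacent
iff their difference is `±(1,0)`, `±(0,1)` or `±(1,1)`. -/
def TGrid : SimpleGraph (ℤ × ℤ) where
  Adj u v :=
    (v.1 - u.1 = 1 ∧ v.2 - u.2 = 0) ∨ (v.1 - u.1 = -1 ∧ v.2 - u.2 = 0) ∨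
    (v.1 - u.1 = 0 ∧ v.2 - u.2 = 1) ∨ (v.1 - u.1 = 0 ∧ v.2 - u.2 = -1) ∨
    (v.1 - u.1 = 1 ∧ v.2 - u.2 = 1) ∨ (v.1 - u.1 = -1 ∧ v.2 - u.2 = -1)
  symm := ⟨fun u v h => by omega⟩
  loopless := ⟨fun u h => by omega⟩

/-- The (symmetric) direction datum of a grid edge: the pair of absolute coordinate
differences.  For grid edges this is `(1,0)` (horizontal), `(0,1)` (vertical) or
`(1,1)` (diagonal). -/
def edir (e : Sym2 (ℤ × ℤ)) : ℤ × ℤ :=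
  Sym2.lift ⟨fun u v => (|u.1 - v.1|, |u.2 - v.2|), by
    intro u v; simp [abs_sub_comm]⟩ e

/-- The `t`-th edge of a walk. -/
def wEdge {u v : ℤ × ℤ} (p : TGrid.Walk u v) (t : ℕ) : Sym2 (ℤ × ℤ) :=
  s(p.getVert t, p.getVert (t + 1))

/-- The number of bends of a walk: the number of consecutive pairs of edges with
different directions. -/
def bendCount {u v : ℤ × ℤ} (p : TGrid.Walk u v) : ℕ :=
  (List.range (p.length - 1)).countP
    (fun i => decide (edir (wEdge p i) ≠ edir (wEdge p (i + 1))))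

/-- `b` is a bend point of the walk `p`. -/
def IsBendAt {u v : ℤ × ℤ} (p : TGrid.Walk u v) (b : ℤ × ℤ) : Prop :=
  ∃ i : ℕ, i + 2 ≤ p.length ∧ p.getVert (i + 1) = b ∧
    edir (wEdge p i) ≠ edir (wEdge p (i + 1))

/-- A (nontrivial simple) path on the triangular grid. -/
structure TPath where
  src : ℤ × ℤ
  dst : ℤ × ℤ
  walk : TGrid.Walk src dst
  isPath : walk.IsPath
  nontriv : 0 < walk.length

/-- The set of grid edges of a path. -/
def pEdges (P : TPath) : Set (Sym2 (ℤ × ℤ)) := {e | e ∈ P.walk.edges}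

/-- The set of grid points of a path. -/
def pPts (P : TPath) : Set (ℤ × ℤ) := {q | q ∈ P.walk.support}

/-- A segment of a path: a maximal straight (bend-free) subpath, recorded by the
interval of edge indices `[i, j)` it occupies. -/
structure Segment (P : TPath) where
  i : ℕ
  j : ℕ
  lt : i < j
  le : j ≤ P.walk.length
  straight : ∀ t, i ≤ t → t < j → edir (wEdge P.walk t) = edir (wEdge P.walk i)
  maxLeft : i = 0 ∨ edir (wEdge P.walk (i - 1)) ≠ edir (wEdge P.walk i)
  maxRight : j = P.walk.length ∨ edir (wEdge P.walk (j - 1)) ≠ edir (wEdge P.walk j)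

/-- The set of grid edges of a segment. -/
def Segment.edges {P : TPath} (s : Segment P) : Set (Sym2 (ℤ × ℤ)) :=
  {e | ∃ t, s.i ≤ t ∧ t < s.j ∧ e = wEdge P.walk t}

/-- The set of grid points of a segment. -/
def Segment.pts {P : TPath} (s : Segment P) : Set (ℤ × ℤ) :=
  {q | ∃ t, s.i ≤ t ∧ t ≤ s.j ∧ q = P.walk.getVert t}

/-- The direction of a segment. -/
def Segment.dir {P : TPath} (s : Segment P) : ℤ × ℤ := edir (wEdge P.walk s.i)

/-- The three directions of the triangular grid. -/
inductive Dir | H | V | D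
deriving DecidableEq

/-- The direction of the (straight) line from `a` to `b`. -/
def dirOf (a b : ℤ × ℤ) : Dir :=
  if a.2 = b.2 then .H else if a.1 = b.1 then .V else .D

/-- A grid line of the triangular grid: a full horizontal, vertical or diagonal line. -/
structure GridLine where
  dir : Dir
  c : ℤ

/-- The parametrization of the points of a grid line. -/
def GridLine.pt (l : GridLine) (t : ℤ) : ℤ × ℤ :=
  match l.dir with
  | .H => (t, l.c)
  | .V => (l.c, t)
  | .D => (l.c + t, t)

/-- The `t`-th edge of a grid line. -/
def GridLine.edge (l : GridLine) (t : ℤ) : Sym2 (ℤ × ℤ) := s(l.pt t, l.pt (t + 1))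

/-- The set of grid points of a grid line. -/
def GridLine.pts (l : GridLine) : Set (ℤ × ℤ) := Set.range l.pt

/-- The set of grid edges of a grid line. -/
def GridLine.edges (l : GridLine) : Set (Sym2 (ℤ × ℤ)) := Set.range l.edge

/-- A right triangle of the triangular grid, given by a base corner `p`, a leg
length `k ≥ 1`, and one of the two possible orientations. -/
structure RightTri where
  p : ℤ × ℤ
  k : ℤ
  hk : 1 ≤ k
  orientA : Bool

/-- The set of grid edges of a right triangle. -/
def RightTri.edges (T : RightTri) : Set (Sym2 (ℤ × ℤ)) :=
  if T.orientA then
    {e | ∃ t : ℤ, 0 ≤ t ∧ t < T.k ∧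
      (e = s((T.p.1 + t, T.p.2), (T.p.1 + t + 1, T.p.2)) ∨
       e = s((T.p.1 + T.k, T.p.2 + t), (T.p.1 + T.k, T.p.2 + t + 1)) ∨
       e = s((T.p.1 + t, T.p.2 + t), (T.p.1 + t + 1, T.p.2 + t + 1)))}
  else
    {e | ∃ t : ℤ, 0 ≤ t ∧ t < T.k ∧
      (e = s((T.p.1, T.p.2 + t), (T.p.1, T.p.2 + t + 1)) ∨
       e = s((T.p.1 + t, T.p.2 + T.k), (T.p.1 + t + 1, T.p.2 + T.k)) ∨
       e = s((T.p.1 + t, T.p.2 + t), (T.p.1 + t + 1, T.p.2 + t + 1)))}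

/-- The three corners of a right triangle. -/
def RightTri.corners (T : RightTri) : Set (ℤ × ℤ) :=
  if T.orientA then {T.p, (T.p.1 + T.k, T.p.2), (T.p.1 + T.k, T.p.2 + T.k)}
  else {T.p, (T.p.1, T.p.2 + T.k), (T.p.1 + T.k, T.p.2 + T.k)}

/-- `U(𝒫)`: the subgraph of the grid formed by all segments of members of the family
that share at least one grid edge with another member, given by its set of edges. -/
def UEdges {ι : Type} (P : ι → TPath) : Set (Sym2 (ℤ × ℤ)) :=
  {e | ∃ i : ι, ∃ s : Segment (P i), e ∈ s.edges ∧
        ∃ j : ι, j ≠ i ∧ (s.edges ∩ pEdges (P j)).Nonempty}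

/-- A B₁-EPGₜ representation of a simple graph `G`: a family of at most-one-bend
paths on the triangular grid whose edge-intersection graph is `G`. -/
def IsB1EPGtRep {V : Type} (G : SimpleGraph V) (Rep : V → TPath) : Prop :=
  (∀ v, bendCount (Rep v).walk ≤ 1) ∧
  ∀ u v : V, u ≠ v → (G.Adj u v ↔ (pEdges (Rep u) ∩ pEdges (Rep v)).Nonempty)


/-! ### Auxiliary lemmas -/

lemma edir_mk (u v : ℤ × ℤ) : edir s(u, v) = (|u.1 - v.1|, |u.2 - v.2|) := rfl

lemma step_eq {u v : ℤ × ℤ} (h : TGrid.Adj u v) :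
    ∃ s : ℤ, (s = 1 ∨ s = -1) ∧ v.1 = u.1 + s * (edir s(u, v)).1 ∧
      v.2 = u.2 + s * (edir s(u, v)).2 := by
  simp only [edir_mk, Int.abs_eq_natAbs]
  rcases h with ⟨h1, h2⟩ | ⟨h1, h2⟩ | ⟨h1, h2⟩ | ⟨h1, h2⟩ | ⟨h1, h2⟩ | ⟨h1, h2⟩
  · exact ⟨1, Or.inl rfl, by omega, by omega⟩
  · exact ⟨-1, Or.inr rfl, by omega, by omega⟩
  · exact ⟨1, Or.inl rfl, by omega, by omega⟩
  · exact ⟨-1, Or.inr rfl, by omega, by omega⟩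
  · exact ⟨1, Or.inl rfl, by omega, by omega⟩
  · exact ⟨-1, Or.inr rfl, by omega, by omega⟩

lemma edir_valid {u v : ℤ × ℤ} (h : TGrid.Adj u v) :
    edir s(u, v) = (1, 0) ∨ edir s(u, v) = (0, 1) ∨ edir s(u, v) = (1, 1) := by
  simp only [edir_mk, Int.abs_eq_natAbs, Prod.mk.injEq]
  rcases h with ⟨h1, h2⟩ | ⟨h1, h2⟩ | ⟨h1, h2⟩ | ⟨h1, h2⟩ | ⟨h1, h2⟩ | ⟨h1, h2⟩ <;> omega

lemma getVert_injOn' {V : Type*} {G : SimpleGraph V} {u v : V} {p : G.Walk u v}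
    (hp : p.IsPath) :
    ∀ i, i ≤ p.length → ∀ j, j ≤ p.length → p.getVert i = p.getVert j → i = j := by
  induction p with
  | nil => intro i hi j hj _; simp at hi hj; omega
  | @cons a b c h q ih =>
    rw [SimpleGraph.Walk.cons_isPath_iff] at hp
    intro i hi j hj hij
    match i, j with
    | 0, 0 => rfl
    | 0, (j+1) =>
      exfalso
      apply hp.2
      rw [SimpleGraph.Walk.mem_support_iff_exists_getVert]
      exact ⟨j, by simpa using hij.symm, by simpa using hj⟩
    | (i+1), 0 =>
      exfalso
      apply hp.2
      rw [SimpleGraph.Walk.mem_support_iff_exists_getVert]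
      exact ⟨i, by simpa using hij, by simpa using hi⟩
    | (i+1), (j+1) =>
      have := ih hp.1 i (by simpa using hi) j (by simpa using hj) (by simpa using hij)
      omega

lemma mem_edges_iff' {V : Type*} {G : SimpleGraph V} {u v : V} (p : G.Walk u v) (e : Sym2 V) :
    e ∈ p.edges ↔ ∃ t, t < p.length ∧ e = s(p.getVert t, p.getVert (t + 1)) := by
  induction p with
  | nil => simp
  | @cons a b c h q ih =>
    simp only [SimpleGraph.Walk.edges_cons, List.mem_cons, ih, SimpleGraph.Walk.length_cons]
    constructor
    · rintro (rfl | ⟨t, ht, rfl⟩)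
      · exact ⟨0, by omega, by simp⟩
      · exact ⟨t + 1, by omega, by simp⟩
    · rintro ⟨t, ht, rfl⟩
      match t with
      | 0 => left; simp
      | (t+1) => right; exact ⟨t, by omega, by simp⟩

lemma run_param {u v : ℤ × ℤ} {p : TGrid.Walk u v} (hp : p.IsPath) {a c : ℕ}
    (hc : c ≤ p.length) {d : ℤ × ℤ}
    (hdir : ∀ t, a ≤ t → t < c → edir (wEdge p t) = d) (hac : a < c) :
    ∃ ε : ℤ, (ε = 1 ∨ ε = -1) ∧ ∀ t, a ≤ t → t ≤ c →
      (p.getVert t).1 = (p.getVert a).1 + ε * ((t : ℤ) - (a : ℤ)) * d.1 ∧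
      (p.getVert t).2 = (p.getVert a).2 + ε * ((t : ℤ) - (a : ℤ)) * d.2 := by
  have hstep : ∀ t, a ≤ t → t < c → ∃ s : ℤ, (s = 1 ∨ s = -1) ∧
      (p.getVert (t+1)).1 = (p.getVert t).1 + s * d.1 ∧
      (p.getVert (t+1)).2 = (p.getVert t).2 + s * d.2 := by
    intro t h1 h2
    have hd : edir s(p.getVert t, p.getVert (t+1)) = d := hdir t h1 h2
    obtain ⟨s, hs, e1, e2⟩ := step_eq (p.adj_getVert_succ (lt_of_lt_of_le h2 hc))
    rw [hd] at e1 e2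
    exact ⟨s, hs, e1, e2⟩
  obtain ⟨ε, hε, hε1, hε2⟩ := hstep a le_rfl hac
  have key : ∀ t, a ≤ t → t < c →
      (p.getVert (t+1)).1 = (p.getVert t).1 + ε * d.1 ∧
      (p.getVert (t+1)).2 = (p.getVert t).2 + ε * d.2 := by
    intro t ht
    induction t, ht using Nat.le_induction with
    | base => exact fun _ => ⟨hε1, hε2⟩
    | succ t ht ih =>
      intro htc
      have h1 : t < c := by omega
      obtain ⟨f1, f2⟩ := ih h1
      obtain ⟨s, hs, e1, e2⟩ := hstep (t+1) (by omega) htc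
      by_cases hse : s = ε
      · rw [hse] at e1 e2; exact ⟨e1, e2⟩
      · exfalso
        have hs' : s = -ε := by rcases hs with rfl | rfl <;> rcases hε with rfl | rfl <;> omega
        have g1 : s * d.1 = -(ε * d.1) := by rw [hs']; ring
        have g2 : s * d.2 = -(ε * d.2) := by rw [hs']; ring
        have hvv : p.getVert (t+1+1) = p.getVert t := Prod.ext_iff.mpr ⟨by omega, by omega⟩
        have := getVert_injOn' hp (t+1+1) (by omega) t (by omega) hvv
        omega
  refine ⟨ε, hε, ?_⟩
  intro t ht htc
  induction t, ht using Nat.le_induction with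
  | base => simp
  | succ t ht ih =>
    obtain ⟨f1, f2⟩ := ih (by omega)
    obtain ⟨e1, e2⟩ := key t ht (by omega)
    constructor
    · rw [e1, f1]; push_cast; ring
    · rw [e2, f2]; push_cast; ring

def lineEdge (b d : ℤ × ℤ) (ε m : ℤ) : Sym2 (ℤ × ℤ) :=
  s((b.1 + ε * m * d.1, b.2 + ε * m * d.2),
    (b.1 + ε * (m + 1) * d.1, b.2 + ε * (m + 1) * d.2))

lemma line_f_eq {b b' d : ℤ × ℤ} (hd : d = (1,0) ∨ d = (0,1) ∨ d = (1,1))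
    {ε ε' m m' : ℤ} (hε : ε = 1 ∨ ε = -1) (hε' : ε' = 1 ∨ ε' = -1)
    (h : lineEdge b d ε m = lineEdge b' d ε' m') :
    b.1 * d.2 - b.2 * d.1 = b'.1 * d.2 - b'.2 * d.1 := by
  rcases hd with rfl | rfl | rfl <;>
    simp only [lineEdge, Sym2.eq_iff, Prod.mk.injEq, mul_one, mul_zero, add_zero] at h ⊢ <;>
    rcases hε with rfl | rfl <;> rcases hε' with rfl | rfl <;> omega

lemma bend_eq {b b' d d' : ℤ × ℤ} (hd : d = (1,0) ∨ d = (0,1) ∨ d = (1,1))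
    (hd' : d' = (1,0) ∨ d' = (0,1) ∨ d' = (1,1)) (hne : d ≠ d')
    (h1 : b.1 * d.2 - b.2 * d.1 = b'.1 * d.2 - b'.2 * d.1)
    (h2 : b.1 * d'.2 - b.2 * d'.1 = b'.1 * d'.2 - b'.2 * d'.1) : b = b' := by
  rcases hd with rfl | rfl | rfl <;> rcases hd' with rfl | rfl | rfl <;>
    first
      | exact absurd rfl hne
      | (simp only [mul_one, mul_zero, zero_sub, sub_zero] at h1 h2;
         exact Prod.ext_iff.mpr ⟨by omega, by omega⟩)

lemma eps_eq {b d : ℤ × ℤ} (hd : d = (1,0) ∨ d = (0,1) ∨ d = (1,1))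
    {ε ε' : ℤ} (hε : ε = 1 ∨ ε = -1) (hε' : ε' = 1 ∨ ε' = -1) {m m' : ℕ}
    (h : lineEdge b d ε m = lineEdge b d ε' m') : ε = ε' := by
  rcases hd with rfl | rfl | rfl <;>
    simp only [lineEdge, Sym2.eq_iff, Prod.mk.injEq, mul_one, mul_zero, add_zero] at h <;>
    rcases hε with rfl | rfl <;> rcases hε' with rfl | rfl <;> omega

lemma core {b1 b2 da db : ℤ × ℤ} {εa εb Ea Eb : ℤ}
    (hva : da = (1,0) ∨ da = (0,1) ∨ da = (1,1))
    (hvb : db = (1,0) ∨ db = (0,1) ∨ db = (1,1)) (hne : da ≠ db)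
    (hεa : εa = 1 ∨ εa = -1) (hEa : Ea = 1 ∨ Ea = -1)
    (hεb : εb = 1 ∨ εb = -1) (hEb : Eb = 1 ∨ Eb = -1)
    {e0 e' : Sym2 (ℤ × ℤ)} {m1 m2 n1 n2 : ℕ}
    (h10 : e0 = lineEdge b1 da εa m1) (h20 : e0 = lineEdge b2 da Ea m2)
    (h1' : e' = lineEdge b1 db εb n1) (h2' : e' = lineEdge b2 db Eb n2) :
    b1 = b2 ∧ εa = Ea ∧ εb = Eb := by
  have ha := h10.symm.trans h20
  have hb := h1'.symm.trans h2'
  have hb12 : b1 = b2 :=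
    bend_eq hva hvb hne (line_f_eq hva hεa hEa ha) (line_f_eq hvb hεb hEb hb)
  subst hb12
  exact ⟨rfl, eps_eq hva hεa hEa ha, eps_eq hvb hεb hEb hb⟩

lemma onebend (P : TPath) (h : bendCount P.walk = 1) :
    ∃ (b d1 d2 : ℤ × ℤ) (ε1 ε2 : ℤ),
      IsBendAt P.walk b ∧ d1 ≠ d2 ∧
      (d1 = (1,0) ∨ d1 = (0,1) ∨ d1 = (1,1)) ∧
      (d2 = (1,0) ∨ d2 = (0,1) ∨ d2 = (1,1)) ∧
      (ε1 = 1 ∨ ε1 = -1) ∧ (ε2 = 1 ∨ ε2 = -1) ∧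
      (∀ e ∈ pEdges P, (edir e = d1 ∧ ∃ m : ℕ, e = lineEdge b d1 ε1 m) ∨
        (edir e = d2 ∧ ∃ m : ℕ, e = lineEdge b d2 ε2 m)) ∧
      {e ∈ pEdges P | b ∈ e} = {lineEdge b d1 ε1 0, lineEdge b d2 ε2 0} ∧
      (∃ s : Segment P, ∀ e ∈ pEdges P, edir e = d1 → e ∈ s.edges) ∧
      (∃ s : Segment P, ∀ e ∈ pEdges P, edir e = d2 → e ∈ s.edges) := by
  classical
  have hcard : ((Finset.range (P.walk.length - 1)).filter
      (fun i => edir (wEdge P.walk i) ≠ edir (wEdge P.walk (i + 1)))).card = 1 := by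
    have e : bendCount P.walk = ((Finset.range (P.walk.length - 1)).filter
        (fun i => edir (wEdge P.walk i) ≠ edir (wEdge P.walk (i + 1)))).card := by
      unfold bendCount
      rw [List.countP_eq_length_filter]
      rfl
    rw [← e, h]
  obtain ⟨i0, hi0⟩ := Finset.card_eq_one.mp hcard
  have hmem : ∀ t, (t < P.walk.length - 1 ∧
      edir (wEdge P.walk t) ≠ edir (wEdge P.walk (t + 1))) ↔ t = i0 := by
    intro t
    rw [← Finset.mem_singleton, ← hi0, Finset.mem_filter, Finset.mem_range]
  obtain ⟨hi0L, hbnd⟩ := (hmem i0).mpr rfl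
  have hL2 : 2 ≤ P.walk.length := by omega
  have hno : ∀ t, t < P.walk.length - 1 → t ≠ i0 →
      edir (wEdge P.walk t) = edir (wEdge P.walk (t + 1)) := by
    intro t ht hne
    by_contra hcon
    exact hne ((hmem t).mp ⟨ht, hcon⟩)
  have hlowc : ∀ k, k ≤ i0 →
      edir (wEdge P.walk (i0 - k)) = edir (wEdge P.walk i0) := by
    intro k hk
    induction k with
    | zero => rfl
    | succ k ih =>
      have h3 := hno (i0 - (k + 1)) (by omega) (by omega)
      rw [show i0 - (k + 1) + 1 = i0 - k by omega] at h3
      rw [h3]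
      exact ih (by omega)
  have hlow : ∀ t, t ≤ i0 → edir (wEdge P.walk t) = edir (wEdge P.walk i0) := by
    intro t ht
    have h4 := hlowc (i0 - t) (by omega)
    rwa [show i0 - (i0 - t) = t by omega] at h4
  have hhigh : ∀ t, i0 + 1 ≤ t → t < P.walk.length →
      edir (wEdge P.walk t) = edir (wEdge P.walk (i0 + 1)) := by
    intro t ht
    induction t, ht using Nat.le_induction with
    | base => intro _; rfl
    | succ t ht ih =>
      intro htL
      have h3 := hno t (by omega) (by omega)
      rw [← h3]
      exact ih (by omega)
  obtain ⟨εA, hεA, FA⟩ := run_param P.isPath (a := 0) (c := i0 + 1)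
    (by omega) (d := edir (wEdge P.walk i0)) (fun t _ hlt => hlow t (by omega)) (by omega)
  obtain ⟨εB, hεB, FB⟩ := run_param P.isPath (a := i0 + 1) (c := P.walk.length)
    le_rfl (d := edir (wEdge P.walk (i0 + 1))) (fun t h1 h2 => hhigh t h1 h2) (by omega)
  have hv1 : edir (wEdge P.walk i0) = (1, 0) ∨ edir (wEdge P.walk i0) = (0, 1) ∨
      edir (wEdge P.walk i0) = (1, 1) :=
    edir_valid (P.walk.adj_getVert_succ (show i0 < P.walk.length by omega))
  have hv2 : edir (wEdge P.walk (i0 + 1)) = (1, 0) ∨ edir (wEdge P.walk (i0 + 1)) = (0, 1) ∨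
      edir (wEdge P.walk (i0 + 1)) = (1, 1) :=
    edir_valid (P.walk.adj_getVert_succ (show i0 + 1 < P.walk.length by omega))
  have repA : ∀ t, t ≤ i0 → wEdge P.walk t =
      lineEdge (P.walk.getVert (i0 + 1)) (edir (wEdge P.walk i0)) (-εA) ((i0 - t : ℕ) : ℤ) := by
    intro t ht
    have g1 := FA t (by omega) (by omega)
    have g2 := FA (t + 1) (by omega) (by omega)
    have gb := FA (i0 + 1) (by omega) le_rfl
    have hm : ((i0 - t : ℕ) : ℤ) = (i0 : ℤ) - (t : ℤ) := by omega
    show s(P.walk.getVert t, P.walk.getVert (t + 1)) = _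
    simp only [lineEdge]
    refine Sym2.eq_iff.mpr (Or.inr ⟨Prod.ext_iff.mpr ⟨?_, ?_⟩, Prod.ext_iff.mpr ⟨?_, ?_⟩⟩)
    · rw [hm, g1.1, gb.1]; push_cast; ring
    · rw [hm, g1.2, gb.2]; push_cast; ring
    · rw [hm, g2.1, gb.1]; push_cast; ring
    · rw [hm, g2.2, gb.2]; push_cast; ring
  have repB : ∀ t, i0 + 1 ≤ t → t < P.walk.length → wEdge P.walk t =
      lineEdge (P.walk.getVert (i0 + 1)) (edir (wEdge P.walk (i0 + 1))) εB
        ((t - (i0 + 1) : ℕ) : ℤ) := by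
    intro t ht htL
    have g1 := FB t ht (by omega)
    have g2 := FB (t + 1) (by omega) (by omega)
    have hm : ((t - (i0 + 1) : ℕ) : ℤ) = (t : ℤ) - ((i0 : ℤ) + 1) := by omega
    show s(P.walk.getVert t, P.walk.getVert (t + 1)) = _
    simp only [lineEdge]
    refine Sym2.eq_iff.mpr (Or.inl ⟨Prod.ext_iff.mpr ⟨?_, ?_⟩, Prod.ext_iff.mpr ⟨?_, ?_⟩⟩)
    · rw [hm, g1.1]; push_cast; ring
    · rw [hm, g1.2]; push_cast; ring
    · rw [hm, g2.1]; push_cast; ring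
    · rw [hm, g2.2]; push_cast; ring
  have hEdgeA : wEdge P.walk i0 =
      lineEdge (P.walk.getVert (i0 + 1)) (edir (wEdge P.walk i0)) (-εA) 0 := by
    have h5 := repA i0 le_rfl
    simpa using h5
  have hEdgeB : wEdge P.walk (i0 + 1) =
      lineEdge (P.walk.getVert (i0 + 1)) (edir (wEdge P.walk (i0 + 1))) εB 0 := by
    have h5 := repB (i0 + 1) le_rfl (by omega)
    simpa using h5
  refine ⟨P.walk.getVert (i0 + 1), edir (wEdge P.walk i0), edir (wEdge P.walk (i0 + 1)),
    -εA, εB, ⟨i0, by omega, rfl, hbnd⟩, hbnd, hv1, hv2,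
    (by omega), hεB, ?_, ?_, ?_, ?_⟩
  · -- main disjunction
    intro e he
    obtain ⟨t, htL, rfl⟩ := (mem_edges_iff' P.walk e).mp he
    by_cases ht : t ≤ i0
    · exact Or.inl ⟨hlow t ht, ⟨i0 - t, repA t ht⟩⟩
    · exact Or.inr ⟨hhigh t (by omega) htL, ⟨t - (i0 + 1), repB t (by omega) htL⟩⟩
  · -- pair set
    ext e
    simp only [Set.mem_setOf_eq, Set.mem_insert_iff, Set.mem_singleton_iff]
    constructor
    · rintro ⟨he, hbe⟩
      obtain ⟨t, htL, rfl⟩ := (mem_edges_iff' P.walk e).mp he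
      rcases Sym2.mem_iff.mp hbe with hb | hb
      · have h6 := getVert_injOn' P.isPath (i0 + 1) (by omega) t (by omega) hb
        right
        rw [← hEdgeB, ← h6]
        rfl
      · have h6 := getVert_injOn' P.isPath (i0 + 1) (by omega) (t + 1) (by omega) hb
        left
        rw [← hEdgeA, show i0 = t by omega]
        rfl
    · rintro (rfl | rfl)
      · refine ⟨(mem_edges_iff' P.walk _).mpr ⟨i0, by omega, hEdgeA.symm⟩, ?_⟩
        rw [← hEdgeA]
        exact Sym2.mem_iff.mpr (Or.inr rfl)
      · refine ⟨(mem_edges_iff' P.walk _).mpr ⟨i0 + 1, by omega, hEdgeB.symm⟩, ?_⟩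
        rw [← hEdgeB]
        exact Sym2.mem_iff.mpr (Or.inl rfl)
  · -- segment 1
    refine ⟨⟨0, i0 + 1, by omega, by omega, ?_, Or.inl rfl, Or.inr (by simpa using hbnd)⟩, ?_⟩
    · intro t _ htl
      rw [hlow t (by omega)]
      exact (hlow 0 (by omega)).symm
    · intro e he hdir
      obtain ⟨t, htL, rfl⟩ := (mem_edges_iff' P.walk e).mp he
      have ht : t ≤ i0 := by
        by_contra hc
        exact hbnd (hdir.symm.trans (hhigh t (by omega) htL))
      exact ⟨t, Nat.zero_le _, Nat.lt_succ_of_le ht, rfl⟩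
  · -- segment 2
    refine ⟨⟨i0 + 1, P.walk.length, by omega, le_rfl, ?_,
      Or.inr (by simpa using hbnd), Or.inl rfl⟩, ?_⟩
    · intro t ht htl
      rw [hhigh t (by omega) (by omega)]
    · intro e he hdir
      obtain ⟨t, htL, rfl⟩ := (mem_edges_iff' P.walk e).mp he
      have ht : i0 + 1 ≤ t := by
        by_contra hc
        exact hbnd ((hlow t (by omega)).symm.trans hdir)
      exact ⟨t, ht, htL, rfl⟩

/-- If two exactly-one-bend paths on the triangular grid share an
edge, then either their edge intersection is contained in a single segment of one
of them, or they have the same bend point and the same pair of edges incident to it. -/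
theorem stmt1 (P1 P2 : TPath)
    (h1 : bendCount P1.walk = 1) (h2 : bendCount P2.walk = 1)
    (hint : (pEdges P1 ∩ pEdges P2).Nonempty) :
    (∃ s : Segment P1, pEdges P1 ∩ pEdges P2 ⊆ s.edges) ∨
    (∃ s : Segment P2, pEdges P1 ∩ pEdges P2 ⊆ s.edges) ∨
    (∃ b : ℤ × ℤ, IsBendAt P1.walk b ∧ IsBendAt P2.walk b ∧
      {e ∈ pEdges P1 | b ∈ e} = {e ∈ pEdges P2 | b ∈ e}) := by
  obtain ⟨b1, d1, d2, ε1, ε2, hbend1, hne1, hv11, hv12, he11, he12, hrep1, hpair1,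
    hseg11, hseg12⟩ := onebend P1 h1
  obtain ⟨b2, D1, D2, E1, E2, hbend2, hne2, hv21, hv22, he21, he22, hrep2, hpair2,
    hseg21, hseg22⟩ := onebend P2 h2
  obtain ⟨e0, he01, he02⟩ := hint
  by_cases hall : ∀ e ∈ pEdges P1 ∩ pEdges P2, edir e = edir e0
  · rcases hrep1 e0 he01 with ⟨hd, -⟩ | ⟨hd, -⟩
    · obtain ⟨s, hs⟩ := hseg11
      exact Or.inl ⟨s, fun e he => hs e he.1 (by rw [hall e he, hd])⟩
    · obtain ⟨s, hs⟩ := hseg12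
      exact Or.inl ⟨s, fun e he => hs e he.1 (by rw [hall e he, hd])⟩
  · push_neg at hall
    obtain ⟨e', he', hnee⟩ := hall
    refine Or.inr (Or.inr ?_)
    rcases hrep1 e0 he01 with ⟨hd10, m1, hm1⟩ | ⟨hd10, m1, hm1⟩ <;>
      rcases hrep2 e0 he02 with ⟨hd20, m2, hm2⟩ | ⟨hd20, m2, hm2⟩
    · -- e0 : d1 / D1
      rcases hrep1 e' he'.1 with ⟨hd1', n1, hn1⟩ | ⟨hd1', n1, hn1⟩
      · exact absurd (hd1'.trans hd10.symm) hnee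
      rcases hrep2 e' he'.2 with ⟨hd2', n2, hn2⟩ | ⟨hd2', n2, hn2⟩
      · exact absurd (hd2'.trans hd20.symm) hnee
      have hdd : D1 = d1 := hd20.symm.trans hd10
      have hDD : D2 = d2 := hd2'.symm.trans hd1'
      rw [hdd] at hm2 hpair2
      rw [hDD] at hn2 hpair2
      obtain ⟨hb, hEa, hEb⟩ := core hv11 hv12 hne1 he11 he21 he12 he22 hm1 hm2 hn1 hn2
      rw [← hb] at hbend2 hpair2
      rw [← hEa, ← hEb] at hpair2
      exact ⟨b1, hbend1, hbend2, hpair1.trans hpair2.symm⟩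
    · -- e0 : d1 / D2
      rcases hrep1 e' he'.1 with ⟨hd1', n1, hn1⟩ | ⟨hd1', n1, hn1⟩
      · exact absurd (hd1'.trans hd10.symm) hnee
      rcases hrep2 e' he'.2 with ⟨hd2', n2, hn2⟩ | ⟨hd2', n2, hn2⟩
      swap
      · exact absurd (hd2'.trans hd20.symm) hnee
      have hdd : D2 = d1 := hd20.symm.trans hd10
      have hDD : D1 = d2 := hd2'.symm.trans hd1'
      rw [hdd] at hm2 hpair2
      rw [hDD] at hn2 hpair2
      obtain ⟨hb, hEa, hEb⟩ := core hv11 hv12 hne1 he11 he22 he12 he21 hm1 hm2 hn1 hn2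
      rw [← hb] at hbend2 hpair2
      rw [← hEa, ← hEb] at hpair2
      exact ⟨b1, hbend1, hbend2, hpair1.trans ((Set.pair_comm _ _).trans hpair2.symm)⟩
    · -- e0 : d2 / D1
      rcases hrep1 e' he'.1 with ⟨hd1', n1, hn1⟩ | ⟨hd1', n1, hn1⟩
      swap
      · exact absurd (hd1'.trans hd10.symm) hnee
      rcases hrep2 e' he'.2 with ⟨hd2', n2, hn2⟩ | ⟨hd2', n2, hn2⟩
      · exact absurd (hd2'.trans hd20.symm) hnee
      have hdd : D1 = d2 := hd20.symm.trans hd10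
      have hDD : D2 = d1 := hd2'.symm.trans hd1'
      rw [hdd] at hm2 hpair2
      rw [hDD] at hn2 hpair2
      obtain ⟨hb, hEa, hEb⟩ := core hv12 hv11 (Ne.symm hne1) he12 he21 he11 he22 hm1 hm2 hn1 hn2
      rw [← hb] at hbend2 hpair2
      rw [← hEa, ← hEb] at hpair2
      exact ⟨b1, hbend1, hbend2, hpair1.trans ((Set.pair_comm _ _).trans hpair2.symm)⟩
    · -- e0 : d2 / D2
      rcases hrep1 e' he'.1 with ⟨hd1', n1, hn1⟩ | ⟨hd1', n1, hn1⟩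
      swap
      · exact absurd (hd1'.trans hd10.symm) hnee
      rcases hrep2 e' he'.2 with ⟨hd2', n2, hn2⟩ | ⟨hd2', n2, hn2⟩
      swap
      · exact absurd (hd2'.trans hd20.symm) hnee
      have hdd : D2 = d2 := hd20.symm.trans hd10
      have hDD : D1 = d1 := hd2'.symm.trans hd1'
      rw [hdd] at hm2 hpair2
      rw [hDD] at hn2 hpair2
      obtain ⟨hb, hEa, hEb⟩ := core hv12 hv11 (Ne.symm hne1) he12 he22 he11 he21 hm1 hm2 hn1 hn2
      rw [← hb] at hbend2 hpair2
      rw [← hEa, ← hEb] at hpair2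
      exact ⟨b1, hbend1, hbend2, hpair1.trans hpair2.symm⟩
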